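/- Let A ∈ ℂⁿˣⁿ be a Hermitian matrix such that the real part Re(A) (the real matrix of real parts of the entries of A) is invertible, let Λ ⊂ ℝⁿ be any lattice, and let K ⊂ ℝⁿ be compact. Then the complex linear span of the family of functions {x ↦ exp(−(x−λ)·A(x−λ)) : λ ∈ Λ} is dense in the space C(K) of continuous complex-valued functions on K with the supremum norm. -/
import Mathlib

open Matrix

/-- A (full-rank) lattice in `ℝⁿ`: the image of `ℤⁿ` under an invertible real matrix. -/
def IsLattice (n : ℕ) (Λ : Set (Fin n → ℝ)) : Prop :=
  ∃ M : Matrix (Fin n) (Fin n) ℝ, IsUnit M ∧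
    Λ = {x | ∃ k : Fin n → ℤ, x = M.mulVec fun i => (k i : ℝ)}

private lemma herm_dot (n : ℕ) (A : Matrix (Fin n) (Fin n) ℂ) (hA : A.IsHermitian) (u : Fin n → ℝ) :
    (fun i => (u i : ℂ)) ⬝ᵥ A.mulVec (fun i => (u i : ℂ))
      = ((u ⬝ᵥ (A.map Complex.re).mulVec u : ℝ) : ℂ) := by
  have key : ∀ i j, (u i : ℂ) * (A i j * (u j : ℂ)) + (u j : ℂ) * (A j i * (u i : ℂ))
      = (u i : ℂ) * ((Complex.re (A i j) : ℂ) * (u j : ℂ))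
        + (u j : ℂ) * ((Complex.re (A j i) : ℂ) * (u i : ℂ)) := by
    intro i j
    have h1 : A j i = (starRingEnd ℂ) (A i j) := by
      rw [← hA.apply i j]; simp
    have h2 : A i j + (starRingEnd ℂ) (A i j) = 2 * (Complex.re (A i j) : ℂ) := by
      exact_mod_cast Complex.add_conj (A i j)
    rw [h1]
    simp only [Complex.conj_re]
    linear_combination ((u i : ℂ) * (u j : ℂ)) * h2
  simp only [dotProduct, mulVec, Matrix.map_apply, Finset.mul_sum, Complex.ofReal_sum,
    Complex.ofReal_mul]
  apply mul_left_cancel₀ (two_ne_zero (α := ℂ))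
  have e3 : ∑ i, ∑ j, ((u i : ℂ) * (A i j * (u j : ℂ)) + (u j : ℂ) * (A j i * (u i : ℂ)))
      = ∑ i, ∑ j, ((u i : ℂ) * ((Complex.re (A i j) : ℂ) * (u j : ℂ))
        + (u j : ℂ) * ((Complex.re (A j i) : ℂ) * (u i : ℂ))) :=
    Finset.sum_congr rfl fun i _ => Finset.sum_congr rfl fun j _ => key i j
  simp only [Finset.sum_add_distrib] at e3
  have c1 : ∑ i, ∑ j, (u j : ℂ) * (A j i * (u i : ℂ))
      = ∑ i, ∑ j, (u i : ℂ) * (A i j * (u j : ℂ)) := Finset.sum_comm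
  have c2 : ∑ i, ∑ j, (u j : ℂ) * ((Complex.re (A j i) : ℂ) * (u i : ℂ))
      = ∑ i, ∑ j, (u i : ℂ) * ((Complex.re (A i j) : ℂ) * (u j : ℂ)) := Finset.sum_comm
  rw [c1, c2] at e3
  rw [two_mul, two_mul]
  convert e3 using 2

private lemma cont_lin (n : ℕ) (B : Matrix (Fin n) (Fin n) ℝ) (v : Fin n → ℝ) :
    Continuous fun x : Fin n → ℝ => v ⬝ᵥ B.mulVec x := by
  simp only [dotProduct, mulVec]
  exact continuous_finset_sum _ fun i _ =>
    continuous_const.mul (continuous_finset_sum _ fun j _ => continuous_const.mul (continuous_apply j))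

private lemma cont_quad (n : ℕ) (B : Matrix (Fin n) (Fin n) ℝ) :
    Continuous fun x : Fin n → ℝ => x ⬝ᵥ B.mulVec x := by
  simp only [dotProduct, mulVec]
  exact continuous_finset_sum _ fun i _ =>
    (continuous_apply i).mul
      (continuous_finset_sum _ fun j _ => continuous_const.mul (continuous_apply j))

/-- Multivariable Zalik theorem (`C(K)` version): for a Hermitian `A ∈ ℂⁿˣⁿ` with
invertible real part, the span of the translated Gaussians
`x ↦ exp(−(x−λ)·A(x−λ))`, `λ ∈ Λ`, is dense in `C(K, ℂ)` for any lattice `Λ`. -/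
theorem multivariable_zalik_continuousMap
    (n : ℕ) (A : Matrix (Fin n) (Fin n) ℂ) (hA : A.IsHermitian)
    (hRe : IsUnit (A.map Complex.re))
    (Λ : Set (Fin n → ℝ)) (hΛ : IsLattice n Λ)
    (K : Set (Fin n → ℝ)) (hK : IsCompact K) :
    Dense (↑(Submodule.span ℂ
        {g : C(K, ℂ) | ∃ lam ∈ Λ, ∀ x : K,
          g x = Complex.exp (-((fun i => (((x : Fin n → ℝ) i - lam i : ℝ) : ℂ)) ⬝ᵥ
            A.mulVec fun i => (((x : Fin n → ℝ) i - lam i : ℝ) : ℂ)))})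
      : Set C(K, ℂ)) := by
  haveI : CompactSpace K := isCompact_iff_compactSpace.mp hK
  obtain ⟨M, hM, hΛeq⟩ := hΛ
  set B : Matrix (Fin n) (Fin n) ℝ := A.map Complex.re with hBdef
  -- symmetry of B
  have hBsymm : ∀ v w : Fin n → ℝ, v ⬝ᵥ B.mulVec w = w ⬝ᵥ B.mulVec v := by
    have hBT : Bᵀ = B := by
      ext i j
      simp only [transpose_apply, hBdef, Matrix.map_apply]
      rw [← hA.apply i j]
      simp
    intro v w
    rw [dotProduct_mulVec, ← hBT, vecMul_transpose, hBT, dotProduct_comm]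
  -- lattice facts
  have h0 : (0 : Fin n → ℝ) ∈ Λ := by
    rw [hΛeq]
    refine ⟨0, ?_⟩
    rw [show (fun i => (((0 : Fin n → ℤ) i : ℤ) : ℝ)) = (0 : Fin n → ℝ) from
      funext fun i => by simp, Matrix.mulVec_zero]
  have hadd : ∀ lam mu : Fin n → ℝ, lam ∈ Λ → mu ∈ Λ → lam + mu ∈ Λ := by
    rw [hΛeq]
    rintro _ _ ⟨k1, rfl⟩ ⟨k2, rfl⟩
    refine ⟨k1 + k2, ?_⟩
    have hfun : (fun i => (((k1 + k2) i : ℤ) : ℝ))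
        = (fun i => ((k1 i : ℤ) : ℝ)) + fun i => ((k2 i : ℤ) : ℝ) := by
      funext i
      simp only [Pi.add_apply]
      push_cast
      ring
    rw [hfun, Matrix.mulVec_add]
  -- the exponential maps
  let e : (Fin n → ℝ) → C(K, ℂ) := fun lam =>
    ⟨fun x => Complex.exp ((2 * (lam ⬝ᵥ B.mulVec (x : Fin n → ℝ)) : ℝ) : ℂ),
      Complex.continuous_exp.comp (Complex.continuous_ofReal.comp
        (continuous_const.mul ((cont_lin n B lam).comp continuous_subtype_val)))⟩
  have he_apply : ∀ lam (x : K), e lam x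
      = Complex.exp ((2 * (lam ⬝ᵥ B.mulVec (x : Fin n → ℝ)) : ℝ) : ℂ) := fun _ _ => rfl
  have hemul : ∀ lam mu : Fin n → ℝ, e lam * e mu = e (lam + mu) := by
    intro lam mu
    ext x
    simp only [ContinuousMap.mul_apply, he_apply, ← Complex.exp_add]
    congr 1
    rw [add_dotProduct]
    push_cast
    ring
  have heone : e 0 = 1 := by
    ext x
    simp [he_apply, zero_dotProduct]
  have hestar : ∀ lam : Fin n → ℝ, star (e lam) = e lam := by
    intro lam
    ext x
    simp only [ContinuousMap.star_apply, he_apply, RCLike.star_def, ← Complex.exp_conj,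
      Complex.conj_ofReal]
  set E : Set C(K, ℂ) := e '' Λ with hEdef
  -- E is a submonoid
  let N : Submonoid C(K, ℂ) :=
    { carrier := E
      mul_mem' := by
        rintro _ _ ⟨lam, hlam, rfl⟩ ⟨mu, hmu, rfl⟩
        exact ⟨lam + mu, hadd _ _ hlam hmu, (hemul lam mu).symm⟩
      one_mem' := ⟨0, h0, heone⟩ }
  -- the star subalgebra generated by E
  set T : StarSubalgebra ℂ C(K, ℂ) := StarAlgebra.adjoin ℂ E with hTdef
  have hEstar : E ∪ star E = E := by
    apply Set.union_eq_self_of_subset_right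
    intro g hg
    rw [Set.mem_star] at hg
    obtain ⟨lam, hlam, hge⟩ := hg
    have : g = e lam := by rw [← hestar lam, hge, star_star]
    exact this ▸ ⟨lam, hlam, rfl⟩
  have hspan : (T : Set C(K, ℂ)) = ((Submodule.span ℂ E : Submodule ℂ C(K, ℂ)) : Set C(K, ℂ)) := by
    have h1 : T.toSubalgebra = Algebra.adjoin ℂ E := by
      rw [hTdef, StarAlgebra.adjoin_toSubalgebra, hEstar]
    have h2 : Subalgebra.toSubmodule (Algebra.adjoin ℂ E) = Submodule.span ℂ E := by
      rw [Algebra.adjoin_eq_span]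
      congr 1
      exact congrArg _ (Submonoid.closure_eq N)
    calc (T : Set C(K, ℂ)) = (T.toSubalgebra : Set C(K, ℂ)) := rfl
      _ = ((Subalgebra.toSubmodule T.toSubalgebra : Submodule ℂ C(K, ℂ)) : Set C(K, ℂ)) := rfl
      _ = _ := by rw [h1, h2]
  -- separation of points
  have hsep : T.SeparatesPoints := by
    intro x y hxy
    have hd : (x : Fin n → ℝ) - (y : Fin n → ℝ) ≠ 0 := by
      intro h
      exact hxy (Subtype.ext (by rwa [sub_eq_zero] at h))
    set d : Fin n → ℝ := (x : Fin n → ℝ) - (y : Fin n → ℝ) with hddef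
    have hBd : B.mulVec d ≠ 0 := by
      intro h
      exact hd (Matrix.mulVec_injective_iff_isUnit.mpr hRe (by rw [h, Matrix.mulVec_zero]))
    -- find a lattice vector not orthogonal to B d
    have hlam : ∃ lam ∈ Λ, lam ⬝ᵥ B.mulVec d ≠ 0 := by
      by_contra hcon
      push_neg at hcon
      apply hBd
      have hv : (B.mulVec d) ᵥ* M = 0 := by
        funext i
        have hmem : M.mulVec (fun j => ((Pi.single i 1 : Fin n → ℤ) j : ℝ)) ∈ Λ := by
          rw [hΛeq]; exact ⟨Pi.single i 1, rfl⟩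
        have := hcon _ hmem
        rw [dotProduct_comm, dotProduct_mulVec] at this
        have hsingle : (fun j => ((Pi.single i 1 : Fin n → ℤ) j : ℝ)) = Pi.single i (1 : ℝ) := by
          funext j
          by_cases hji : j = i <;> simp [hji, Pi.single_apply]
        rw [hsingle, dotProduct_single, mul_one] at this
        exact this
      have hinj := Matrix.vecMul_injective_iff_isUnit.mpr hM
      exact hinj (show (B.mulVec d) ᵥ* M = (0 : Fin n → ℝ) ᵥ* M by
        rw [hv, Matrix.zero_vecMul])
    obtain ⟨lam, hlamΛ, hlamd⟩ := hlam
    refine ⟨_, ⟨e lam, ?_, rfl⟩, ?_⟩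
    · exact StarAlgebra.subset_adjoin ℂ E ⟨lam, hlamΛ, rfl⟩
    · simp only [he_apply]
      intro hcontra
      rw [← Complex.ofReal_exp, ← Complex.ofReal_exp] at hcontra
      have := Real.exp_injective (Complex.ofReal_injective hcontra)
      apply hlamd
      have h2 : lam ⬝ᵥ B.mulVec (x : Fin n → ℝ) = lam ⬝ᵥ B.mulVec (y : Fin n → ℝ) := by
        have h2' : (2 : ℝ) ≠ 0 := two_ne_zero
        field_simp at this
        exact this
      rw [hddef, Matrix.mulVec_sub, dotProduct_sub, h2, sub_self]
  -- density of the span of E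
  have hWdense : closure ((Submodule.span ℂ E : Submodule ℂ C(K, ℂ)) : Set C(K, ℂ))
      = Set.univ := by
    have htop := ContinuousMap.starSubalgebra_topologicalClosure_eq_top_of_separatesPoints T hsep
    have h1 : (T.topologicalClosure : Set C(K, ℂ)) = closure (T : Set C(K, ℂ)) :=
      StarSubalgebra.topologicalClosure_coe T
    rw [← hspan, ← h1, htop]
    rfl
  -- the Gaussian factor
  set q : (Fin n → ℝ) → ℝ := fun z => z ⬝ᵥ B.mulVec z with hqdef
  let G : C(K, ℂ) :=
    ⟨fun x => Complex.exp ((-(q (x : Fin n → ℝ)) : ℝ) : ℂ),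
      Complex.continuous_exp.comp (Complex.continuous_ofReal.comp
        (((cont_quad n B).comp continuous_subtype_val).neg))⟩
  let Ginv : C(K, ℂ) :=
    ⟨fun x => Complex.exp ((q (x : Fin n → ℝ) : ℝ) : ℂ),
      Complex.continuous_exp.comp (Complex.continuous_ofReal.comp
        ((cont_quad n B).comp continuous_subtype_val))⟩
  have hGGinv : G * Ginv = 1 := by
    ext x
    have hx : (G * Ginv) x
        = Complex.exp ((-(q (x : Fin n → ℝ)) : ℝ) : ℂ) * Complex.exp ((q (x : Fin n → ℝ) : ℝ) : ℂ) :=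
      rfl
    rw [hx, ← Complex.exp_add, ContinuousMap.one_apply]
    push_cast
    rw [neg_add_cancel, Complex.exp_zero]
  -- the generators of S
  set gset : Set C(K, ℂ) := {g : C(K, ℂ) | ∃ lam ∈ Λ, ∀ x : K,
          g x = Complex.exp (-((fun i => (((x : Fin n → ℝ) i - lam i : ℝ) : ℂ)) ⬝ᵥ
            A.mulVec fun i => (((x : Fin n → ℝ) i - lam i : ℝ) : ℂ)))} with hgsetdef
  have hgreal : ∀ (lam : Fin n → ℝ) (x : K),
      Complex.exp (-((fun i => (((x : Fin n → ℝ) i - lam i : ℝ) : ℂ)) ⬝ᵥ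
            A.mulVec fun i => (((x : Fin n → ℝ) i - lam i : ℝ) : ℂ)))
      = Complex.exp ((-(q ((x : Fin n → ℝ) - lam)) : ℝ) : ℂ) := by
    intro lam x
    have := herm_dot n A hA ((x : Fin n → ℝ) - lam)
    simp only [Pi.sub_apply] at this
    rw [this]
    push_cast
    rfl
  let g : (Fin n → ℝ) → C(K, ℂ) := fun lam =>
    ⟨fun x => Complex.exp (-((fun i => (((x : Fin n → ℝ) i - lam i : ℝ) : ℂ)) ⬝ᵥ
            A.mulVec fun i => (((x : Fin n → ℝ) i - lam i : ℝ) : ℂ))),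
      by
        have : (fun x : K => Complex.exp (-((fun i => (((x : Fin n → ℝ) i - lam i : ℝ) : ℂ)) ⬝ᵥ
            A.mulVec fun i => (((x : Fin n → ℝ) i - lam i : ℝ) : ℂ))))
            = fun x : K => Complex.exp ((-(q ((x : Fin n → ℝ) - lam)) : ℝ) : ℂ) :=
          funext fun x => hgreal lam x
        rw [this]
        exact Complex.continuous_exp.comp (Complex.continuous_ofReal.comp
          (((cont_quad n B).comp ((continuous_subtype_val).sub continuous_const)).neg))⟩
  have hgmem : ∀ lam ∈ Λ, g lam ∈ gset := fun lam hlam => ⟨lam, hlam, fun x => rfl⟩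
  -- key identity : G * e lam = exp(lam ⬝ B lam) • g lam
  have hGe : ∀ lam : Fin n → ℝ,
      G * e lam = Complex.exp ((q lam : ℝ) : ℂ) • g lam := by
    intro lam
    ext x
    simp only [ContinuousMap.mul_apply, ContinuousMap.smul_apply, smul_eq_mul, he_apply]
    show Complex.exp ((-(q (x : Fin n → ℝ)) : ℝ) : ℂ) * _ = _ * (g lam) x
    have hgx : (g lam) x = Complex.exp ((-(q ((x : Fin n → ℝ) - lam)) : ℝ) : ℂ) := hgreal lam x
    rw [hgx, ← Complex.exp_add, ← Complex.exp_add]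
    congr 1
    have expand : q ((x : Fin n → ℝ) - lam)
        = q (x : Fin n → ℝ) - 2 * (lam ⬝ᵥ B.mulVec (x : Fin n → ℝ)) + q lam := by
      simp only [hqdef]
      rw [Matrix.mulVec_sub, dotProduct_sub, sub_dotProduct, sub_dotProduct,
        hBsymm (x : Fin n → ℝ) lam]
      ring
    push_cast
    rw [expand]
    push_cast
    ring
  -- transfer
  have hmaps : Set.MapsTo (fun w => G * w)
      ((Submodule.span ℂ E : Submodule ℂ C(K, ℂ)) : Set C(K, ℂ))
      ((Submodule.span ℂ gset : Submodule ℂ C(K, ℂ)) : Set C(K, ℂ)) := by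
    intro w hw
    have hle : Submodule.span ℂ E ≤
        (Submodule.span ℂ gset).comap (LinearMap.mulLeft ℂ G) := by
      rw [Submodule.span_le]
      rintro _ ⟨lam, hlam, rfl⟩
      simp only [SetLike.mem_coe, Submodule.mem_comap, LinearMap.mulLeft_apply]
      rw [hGe lam]
      exact Submodule.smul_mem _ _ (Submodule.subset_span (hgmem lam hlam))
    exact hle hw
  rw [dense_iff_closure_eq, Set.eq_univ_iff_forall]
  intro f
  have hf : Ginv * f ∈ closure ((Submodule.span ℂ E : Submodule ℂ C(K, ℂ)) : Set C(K, ℂ)) := by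
    rw [hWdense]; trivial
  have h2 := map_mem_closure (continuous_mul_left G) hf hmaps
  have h3 : G * (Ginv * f) = f := by rw [← mul_assoc, hGGinv, one_mul]
  rwa [h3] at h2
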